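/- Let S and S' be infinite families of finite subsets of ℕ with S' ≤ S. Then every infinite set coded by S' is contained in an infinite set coded by S. -/

import Mathlib

/-- The maximum of all elements of all members of `S n`. -/
def famMax (S : ℕ → Finset (Finset ℕ)) (n : ℕ) : ℕ :=
  (S n).sup fun E => E.sup id

/-- `S` is a family of finite subsets of ℕ: every member of `S (n+1)` properly
extends a member of `S n` by elements larger than everything appearing in `S n`. -/
def IsFamily (S : ℕ → Finset (Finset ℕ)) : Prop :=
  ∀ n, ∀ E ∈ S (n + 1), ∃ E' ∈ S n, E' ⊂ E ∧ ∀ x ∈ E \ E', famMax S n < x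

/-- The family `S` is infinite: every level is nonempty. -/
def InfiniteFamily (S : ℕ → Finset (Finset ℕ)) : Prop :=
  ∀ n, (S n).Nonempty

/-- `E` at level `n+1` is a successor of `E'` at level `n`. -/
def IsSucc (S : ℕ → Finset (Finset ℕ)) (n : ℕ) (E' E : Finset ℕ) : Prop :=
  E' ∈ S n ∧ E ∈ S (n + 1) ∧ E' ⊆ E ∧ ∀ x ∈ E \ E', famMax S n < x

/-- `U` is coded by the family `S`: `U` is the union of an infinite path through `S`
viewed as a finitely branching tree. -/
def CodedBy (S : ℕ → Finset (Finset ℕ)) (U : Set ℕ) : Prop :=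
  ∃ E : ℕ → Finset ℕ, (∀ n, E n ∈ S n) ∧ (∀ n, IsSucc S n (E n) (E (n + 1))) ∧
    U = ⋃ n, ↑(E n)

/-- `S' ≤ S`: every level of `S'` is covered by some level of `S`. -/
def FamilyLE (S' S : ℕ → Finset (Finset ℕ)) : Prop :=
  ∀ n, ∃ m, ∀ E' ∈ S' n, ∃ E ∈ S m, E' ⊆ E

/-! ### Auxiliary material -/

section Aux

variable (S S' : ℕ → Finset (Finset ℕ)) (U : Set ℕ)

/-- A node of the restricted tree: an element of level `k` of `S` which contains
all elements of `U` below `famMax S k`. -/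
def Node (k : ℕ) (F : Finset ℕ) : Prop :=
  F ∈ S k ∧ ∀ x ∈ U, x ≤ famMax S k → x ∈ F

/-- Edge relation on (level, member) pairs of the restricted tree. -/
def Edge (a b : ℕ × Finset ℕ) : Prop :=
  Node S U a.1 a.2 ∧ Node S U b.1 b.2 ∧ b.1 = a.1 + 1 ∧ IsSucc S a.1 a.2 b.2

/-- Reachability in the restricted tree. -/
def Reach : ℕ × Finset ℕ → ℕ × Finset ℕ → Prop := Relation.ReflTransGen (Edge S U)

/-- Members of level `k` of the restricted tree having a descendant at level `j`. -/
def ASet (k j : ℕ) : Set (Finset ℕ) :=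
  {F | Node S U k F ∧ ∃ G, Node S U j G ∧ Reach S U (k, F) (j, G)}

/-- A node is good if it has descendants at every higher level. -/
def Good (k : ℕ) (F : Finset ℕ) : Prop :=
  ∀ j, F ∈ ASet S U k (k + j)

variable {S S' U}

lemma famMax_lt_succ (hS : IsFamily S) (hSinf : InfiniteFamily S) (n : ℕ) :
    famMax S n < famMax S (n + 1) := by
  obtain ⟨E, hE⟩ := hSinf (n + 1)
  obtain ⟨E', -, hsub, hgt⟩ := hS n E hE
  obtain ⟨x, hxE, hxE'⟩ := Finset.exists_of_ssubset hsub
  have h1 : famMax S n < x := hgt x (Finset.mem_sdiff.2 ⟨hxE, hxE'⟩)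
  have h2 : x ≤ famMax S (n + 1) :=
    le_trans (Finset.le_sup (f := id) hxE) (Finset.le_sup (f := fun E => E.sup id) hE)
  exact lt_of_lt_of_le h1 h2

lemma famMax_strictMono (hS : IsFamily S) (hSinf : InfiniteFamily S) :
    StrictMono (famMax S) :=
  strictMono_nat_of_lt_succ (famMax_lt_succ hS hSinf)

/-- Descend from level `k + d` down to level `k`. -/
lemma descend (hS : IsFamily S) (hSinf : InfiniteFamily S) :
    ∀ d k G, G ∈ S (k + d) → ∃ H ∈ S k, H ⊆ G ∧ ∀ x ∈ G, x ∉ H → famMax S k < x := by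
  intro d
  induction d with
  | zero => exact fun k G hG => ⟨G, hG, subset_rfl, fun x hx hx' => absurd hx hx'⟩
  | succ d ih =>
    intro k G hG
    obtain ⟨E', hE', hsub, hgt⟩ := hS (k + d) G hG
    obtain ⟨H, hH, hHsub, hHgt⟩ := ih k E' hE'
    refine ⟨H, hH, hHsub.trans hsub.subset, fun x hx hx' => ?_⟩
    by_cases hxE' : x ∈ E'
    · exact hHgt x hxE' hx'
    · exact lt_of_le_of_lt ((famMax_strictMono hS hSinf).monotone (Nat.le_add_right k d))
        (hgt x (Finset.mem_sdiff.2 ⟨hx, hxE'⟩))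

/-- Every node of the restricted tree at a positive level has an edge-predecessor. -/
lemma pred_node (hS : IsFamily S) (hSinf : InfiniteFamily S) {m : ℕ} {G : Finset ℕ}
    (hG : Node S U (m + 1) G) :
    ∃ F, Node S U m F ∧ Edge S U (m, F) (m + 1, G) := by
  obtain ⟨E', hE', hsub, hgt⟩ := hS m G hG.1
  have hnode : Node S U m E' := by
    refine ⟨hE', fun x hxU hxle => ?_⟩
    have hxG : x ∈ G := hG.2 x hxU (hxle.trans (famMax_lt_succ hS hSinf m).le)
    by_contra hx
    exact absurd (hgt x (Finset.mem_sdiff.2 ⟨hxG, hx⟩)) (not_lt.2 hxle)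
  exact ⟨E', hnode, hnode, hG, rfl, hE', hG.1, hsub.subset, hgt⟩

lemma reach_level {a b : ℕ × Finset ℕ} (h : Reach S U a b) : a.1 ≤ b.1 := by
  induction h with
  | refl => exact le_rfl
  | tail _ h2 ih =>
    have := h2.2.2.1
    omega

/-- Truncation: a reachability chain passes through every intermediate level. -/
lemma reach_trunc {a b : ℕ × Finset ℕ} (h : Reach S U a b) :
    ∀ j, a.1 ≤ j → j ≤ b.1 → ∃ c, c.1 = j ∧ Reach S U a c ∧ Reach S U c b := by
  induction h using Relation.ReflTransGen.head_induction_on with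
  | refl =>
    intro j h1 h2
    exact ⟨b, le_antisymm h1 h2, Relation.ReflTransGen.refl, Relation.ReflTransGen.refl⟩
  | head hab hbc ih =>
    rename_i a a'
    intro j hj1 hj2
    have ha' : a'.1 = a.1 + 1 := hab.2.2.1
    rcases eq_or_lt_of_le hj1 with hj | hj
    · exact ⟨a, hj, Relation.ReflTransGen.refl, Relation.ReflTransGen.head hab hbc⟩
    · obtain ⟨c, hc1, hc2, hc3⟩ := ih j (by omega) hj2
      exact ⟨c, hc1, Relation.ReflTransGen.head hab hc2, hc3⟩

/-- `ASet` is antitone in the target level. -/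
lemma ASet_anti (k : ℕ) {j j' : ℕ} (hk : k ≤ j') (hj : j' ≤ j) :
    ASet S U k j ⊆ ASet S U k j' := by
  rintro F ⟨hF, G, hG, hreach⟩
  refine ⟨hF, ?_⟩
  rcases eq_or_lt_of_le hj with rfl | hlt
  · exact ⟨G, hG, hreach⟩
  · obtain ⟨c, hc1, hc2, hc3⟩ := reach_trunc hreach j' hk hj
    rcases hc3.cases_head with h | ⟨d, hd, -⟩
    · exfalso
      have : c.1 = j := by rw [h]
      omega
    · have hnode : Node S U c.1 c.2 := hd.1
      have hc : (j', c.2) = c := by rw [← hc1]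
      refine ⟨c.2, hc1 ▸ hnode, ?_⟩
      rw [hc]
      exact hc2

/-- A decreasing sequence of nonempty subsets of a finite set has a common element. -/
lemma stab {α : Type*} (B : ℕ → Set α) (hfin : (B 0).Finite)
    (hdec : ∀ j, B (j + 1) ⊆ B j) (hne : ∀ j, (B j).Nonempty) :
    ∃ x, ∀ j, x ∈ B j := by
  have hanti : ∀ i j : ℕ, i ≤ j → B j ⊆ B i := by
    intro i j h
    induction h with
    | refl => exact subset_rfl
    | step h ih => exact fun x hx => ih (hdec _ hx)
  have hfinj : ∀ j, (B j).Finite := fun j => hfin.subset (hanti 0 j (Nat.zero_le j))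
  have hmem : {m | ∃ j, (B j).ncard = m}.Nonempty := ⟨(B 0).ncard, 0, rfl⟩
  obtain ⟨j₀, hj₀⟩ : ∃ j, (B j).ncard = sInf {m | ∃ j, (B j).ncard = m} :=
    Nat.sInf_mem hmem
  obtain ⟨x, hx⟩ := hne j₀
  refine ⟨x, fun j => ?_⟩
  rcases le_total j j₀ with h | h
  · exact hanti j j₀ h hx
  · have hsub : B j ⊆ B j₀ := hanti j₀ j h
    have hle : (B j₀).ncard ≤ (B j).ncard := hj₀ ▸ Nat.sInf_le ⟨j, rfl⟩
    rw [Set.eq_of_subset_of_ncard_le hsub hle (hfinj j₀)]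
    exact hx

/-- Every level of the restricted tree is nonempty. -/
lemma node_exists (hS : IsFamily S) (hSinf : InfiniteFamily S)
    (hle : FamilyLE S' S) (hU : CodedBy S' U) (hUinf : U.Infinite) (k : ℕ) :
    ∃ F, Node S U k F := by
  obtain ⟨E, hE, hEsucc, hEU⟩ := hU
  have hmonoE : Monotone E := monotone_nat_of_le_succ fun n => (hEsucc n).2.2.1
  have hmemE : ∀ x ∈ U, ∃ n, x ∈ E n := by
    intro x hx
    rw [hEU] at hx
    simpa using hx
  have hcov : ∀ Q : Finset ℕ, (∀ x ∈ Q, x ∈ U) → ∃ N, ∀ x ∈ Q, x ∈ E N := by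
    intro Q
    induction Q using Finset.induction_on with
    | empty => exact fun _ => ⟨0, by simp⟩
    | insert a s hx ih =>
      intro h
      obtain ⟨N, hN⟩ := ih fun x hx => h x (Finset.mem_insert_of_mem hx)
      obtain ⟨M, hM⟩ := hmemE a (h a (Finset.mem_insert_self a s))
      refine ⟨max N M, fun x hx' => ?_⟩
      rcases Finset.mem_insert.1 hx' with rfl | hx'
      · exact hmonoE (le_max_right N M) hM
      · exact hmonoE (le_max_left N M) (hN x hx')
  set B := famMax S k with hB
  have hfin : {x | x ∈ U ∧ x ≤ B}.Finite :=
    (Set.finite_Iic B).subset fun x hx => hx.2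
  obtain ⟨u, huU, hugt⟩ := hUinf.exists_gt B
  obtain ⟨N, hN⟩ := hcov (insert u hfin.toFinset) (by
    intro x hx
    rcases Finset.mem_insert.1 hx with rfl | hx
    · exact huU
    · exact (hfin.mem_toFinset.1 hx).1)
  obtain ⟨m, hm⟩ := hle N
  obtain ⟨F, hFm, hEF⟩ := hm (E N) (hE N)
  have huF : u ∈ F := hEF (hN u (Finset.mem_insert_self _ _))
  have hum : u ≤ famMax S m :=
    le_trans (Finset.le_sup (f := id) huF) (Finset.le_sup (f := fun E => E.sup id) hFm)
  have hkm : k ≤ m := by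
    by_contra h
    have : famMax S m ≤ famMax S k :=
      (famMax_strictMono hS hSinf).monotone (by omega)
    omega
  obtain ⟨H, hHk, hHF, hHgt⟩ := descend hS hSinf (m - k) k F (by
    rwa [Nat.add_sub_cancel' hkm])
  refine ⟨H, hHk, fun x hxU hxle => ?_⟩
  have hxF : x ∈ F :=
    hEF (hN x (Finset.mem_insert_of_mem (hfin.mem_toFinset.2 ⟨hxU, hxle⟩)))
  by_contra hxH
  exact absurd (hHgt x hxF hxH) (not_lt.2 hxle)

/-- Every node at level `k + d` has an ancestor at level `k`. -/
lemma anc (hS : IsFamily S) (hSinf : InfiniteFamily S) :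
    ∀ d k G, Node S U (k + d) G →
      ∃ F, Node S U k F ∧ Reach S U (k, F) (k + d, G) := by
  intro d
  induction d with
  | zero => exact fun k G hG => ⟨G, hG, Relation.ReflTransGen.refl⟩
  | succ d ih =>
    intro k G hG
    obtain ⟨F', hF', hedge⟩ := pred_node hS hSinf (m := k + d) hG
    obtain ⟨F, hF, hreach⟩ := ih k F' hF'
    exact ⟨F, hF, hreach.tail hedge⟩

lemma good_exists (hS : IsFamily S) (hSinf : InfiniteFamily S)
    (hle : FamilyLE S' S) (hU : CodedBy S' U) (hUinf : U.Infinite) (k : ℕ) :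
    ∃ F, Good S U k F := by
  have hne : ∀ j, (ASet S U k (k + j)).Nonempty := by
    intro j
    obtain ⟨G, hG⟩ := node_exists hS hSinf hle hU hUinf (k + j)
    obtain ⟨F, hF, hr⟩ := anc hS hSinf j k G hG
    exact ⟨F, hF, G, hG, hr⟩
  have hfin : (ASet S U k (k + 0)).Finite :=
    (S k).finite_toSet.subset fun F hF => hF.1.1
  have hdec : ∀ j, ASet S U k (k + (j + 1)) ⊆ ASet S U k (k + j) :=
    fun j => ASet_anti k (Nat.le_add_right k j) (by omega)
  obtain ⟨F, hF⟩ := stab (fun j => ASet S U k (k + j)) hfin hdec hne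
  exact ⟨F, hF⟩

lemma good_step (hS : IsFamily S) (hSinf : InfiniteFamily S) {k : ℕ} {F : Finset ℕ}
    (hF : Good S U k F) :
    ∃ G, Edge S U (k, F) (k + 1, G) ∧ Good S U (k + 1) G := by
  set C : ℕ → Set (Finset ℕ) :=
    fun j => {G | Edge S U (k, F) (k + 1, G) ∧ G ∈ ASet S U (k + 1) (k + 1 + j)} with hC
  have hne : ∀ j, (C j).Nonempty := by
    intro j
    obtain ⟨-, G, hG, hreach⟩ := hF (j + 1)
    rcases hreach.cases_head with h | ⟨d, hd, hr⟩
    · exfalso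
      have : k = k + (j + 1) := congrArg Prod.fst h
      omega
    · have hd1 : d.1 = k + 1 := hd.2.2.1
      have hdeq : (k + 1, d.2) = d := by rw [← hd1]
      have heq : k + 1 + j = k + (j + 1) := by omega
      refine ⟨d.2, by rw [hdeq]; exact hd, ?_⟩
      rw [heq]
      refine ⟨by rw [← hd1]; exact hd.2.1, G, hG, ?_⟩
      rw [hdeq]
      exact hr
  have hdec : ∀ j, C (j + 1) ⊆ C j := by
    rintro j G ⟨hedge, hA⟩
    exact ⟨hedge, ASet_anti (k + 1) (by omega) (by omega) hA⟩
  have hfin : (C 0).Finite :=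
    (S (k + 1)).finite_toSet.subset fun G hG => hG.1.2.1.1
  obtain ⟨G, hG⟩ := stab C hfin hdec hne
  exact ⟨G, (hG 0).1, fun j => (hG j).2⟩

/-- Dependent choice along ℕ. -/
lemma my_dc {α : Type*} {Q : ℕ → α → Prop} {R : ℕ → α → α → Prop}
    (h0 : ∃ a, Q 0 a) (hstep : ∀ n a, Q n a → ∃ b, R n a b ∧ Q (n + 1) b) :
    ∃ f : ℕ → α, (∀ n, Q n (f n)) ∧ ∀ n, R n (f n) (f (n + 1)) := by
  choose g hg1 hg2 using hstep
  let t : (n : ℕ) → {a : α // Q n a} := fun n =>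
    Nat.rec ⟨h0.choose, h0.choose_spec⟩ (fun n p => ⟨g n p.1 p.2, hg2 n p.1 p.2⟩) n
  exact ⟨fun n => (t n).1, fun n => (t n).2, fun n => hg1 n (t n).1 (t n).2⟩

end Aux

/-- If `S' ≤ S` are infinite families, every infinite set coded by `S'` is contained
in an infinite set coded by `S`. -/
theorem codedBy_le_subset (S S' : ℕ → Finset (Finset ℕ))
    (hS : IsFamily S) (hS' : IsFamily S')
    (hSinf : InfiniteFamily S) (hS'inf : InfiniteFamily S')
    (hle : FamilyLE S' S) (U : Set ℕ) (hU : CodedBy S' U) (hUinf : U.Infinite) :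
    ∃ V : Set ℕ, CodedBy S V ∧ V.Infinite ∧ U ⊆ V := by
  have hgood0 : ∃ F, Good S U 0 F := good_exists hS hSinf hle hU hUinf 0
  have hstep : ∀ k F, Good S U k F →
      ∃ G, Edge S U (k, F) (k + 1, G) ∧ Good S U (k + 1) G :=
    fun k F hF => good_step hS hSinf hF
  obtain ⟨E, hQ, hR⟩ := my_dc hgood0 hstep
  have hnode : ∀ n, Node S U n (E n) := fun n => (hQ n 0).1
  have hsub : U ⊆ ⋃ n, ↑(E n) := by
    intro x hx
    have hxle : x ≤ famMax S x := (famMax_strictMono hS hSinf).le_apply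
    exact Set.mem_iUnion.2 ⟨x, (hnode x).2 x hx hxle⟩
  exact ⟨⋃ n, ↑(E n), ⟨E, fun n => (hnode n).1, fun n => (hR n).2.2.2, rfl⟩,
    hUinf.mono hsub, hsub⟩
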